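/- arXiv:2511.11026 — 2 statements merged into one kernel-verified Lean document; each statement's English description precedes it below -/
import Mathlib

section
/- Under the same hypotheses (V positive definite C¹ with V(0)=0, Ω_c compact, V̇ < 0 on Ω_c \ {0}), every solution of ẋ = f(x) starting in Ω_c converges to the origin as t → ∞. -/
open Set

/-- Every solution starting in the compact sublevel set `Ω_c` converges to the origin. -/
theorem sublevel_solutions_tendsto_zero {n : ℕ}
    (D : Set (EuclideanSpace ℝ (Fin n))) (hD : IsOpen D)
    (h0 : (0 : EuclideanSpace ℝ (Fin n)) ∈ D)
    (V : EuclideanSpace ℝ (Fin n) → ℝ) (hV : ContDiffOn ℝ 1 V D)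
    (hV0 : V 0 = 0) (hVpos : ∀ x ∈ D, x ≠ 0 → 0 < V x)
    (f : EuclideanSpace ℝ (Fin n) → EuclideanSpace ℝ (Fin n))
    (hf : ∀ x ∈ D, ∃ K : NNReal, ∃ U ∈ nhds x, LipschitzOnWith K f U)
    (hf0 : f 0 = 0)
    (c : ℝ) (hc : 0 < c)
    (hcomp : IsCompact {x ∈ D | V x ≤ c})
    (hdec : ∀ x ∈ D, V x ≤ c → x ≠ 0 → fderiv ℝ V x (f x) < 0) :
    ∀ x : ℝ → EuclideanSpace ℝ (Fin n),
      (∀ t ∈ Ici (0 : ℝ), HasDerivAt x (f (x t)) t) →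
      x 0 ∈ {y ∈ D | V y ≤ c} →
      Filter.Tendsto x Filter.atTop (nhds 0) := by
  intro x hx hx0
  set Ω : Set (EuclideanSpace ℝ (Fin n)) := {y ∈ D | V y ≤ c} with hΩdef
  have hΩD : Ω ⊆ D := fun y hy => hy.1
  have hΩclosed : IsClosed Ω := hcomp.isClosed
  -- differentiability of V at points of D
  have hfd : ∀ y ∈ D, DifferentiableAt ℝ V y := fun y hy =>
    (hV.differentiableOn one_ne_zero).differentiableAt (hD.mem_nhds hy)
  -- derivative of g = V ∘ x
  have hderiv : ∀ t : ℝ, 0 ≤ t → x t ∈ D →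
      HasDerivAt (fun s => V (x s)) (fderiv ℝ V (x t) (f (x t))) t := by
    intro t ht hxt
    exact (hfd _ hxt).hasFDerivAt.comp_hasDerivAt t (hx t ht)
  -- nonpositivity of the derivative on Ω
  have hle : ∀ y ∈ Ω, fderiv ℝ V y (f y) ≤ 0 := by
    intro y hy
    by_cases hy0 : y = 0
    · simp [hy0, hf0]
    · exact (hdec y hy.1 hy.2 hy0).le
  -- Step C: forward invariance
  have hinv : ∀ t : ℝ, 0 ≤ t → x t ∈ Ω := by
    by_contra hA
    push_neg at hA
    set A : Set ℝ := {t | 0 ≤ t ∧ x t ∉ Ω} with hAdef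
    have hAne : A.Nonempty := by
      obtain ⟨t, ht, hxt⟩ := hA
      exact ⟨t, ht, hxt⟩
    have hAbdd : BddBelow A := ⟨0, fun a ha => ha.1⟩
    set T := sInf A with hTdef
    have hT0 : 0 ≤ T := le_csInf hAne fun a ha => ha.1
    have hbefore : ∀ s : ℝ, 0 ≤ s → s < T → x s ∈ Ω := by
      intro s hs hsT
      by_contra hxs
      exact absurd (csInf_le hAbdd ⟨hs, hxs⟩) (not_le.mpr hsT)
    have hxTΩ : x T ∈ Ω := by
      rcases eq_or_lt_of_le hT0 with h | h
      · simpa [← h] using hx0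
      · have hne : (nhdsWithin T (Ico 0 T)).NeBot := by
          rw [← mem_closure_iff_nhdsWithin_neBot, closure_Ico h.ne]
          exact ⟨hT0, le_rfl⟩
        have htend : Filter.Tendsto x (nhdsWithin T (Ico 0 T)) (nhds (x T)) :=
          ((hx T hT0).continuousAt).continuousWithinAt
        refine hΩclosed.mem_of_tendsto htend ?_
        filter_upwards [self_mem_nhdsWithin] with s hs
        exact hbefore s hs.1 hs.2
    -- points of Ω shortly after T
    have hafter : ∃ ε > 0, ∀ t : ℝ, T < t → t < T + ε → x t ∈ Ω := by
      by_cases hxT0 : x T = 0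
      · -- continuity: V (x T) = 0 < c
        have hcont : ContinuousAt (fun s => V (x s)) T :=
          (hderiv T hT0 hxTΩ.1).continuousAt
        have h1 : ∀ᶠ t in nhds T, V (x t) < c := by
          have : V (x T) < c := by rw [hxT0, hV0]; exact hc
          exact Filter.Tendsto.eventually_lt_const this hcont
        have h2 : ∀ᶠ t in nhds T, x t ∈ D :=
          ((hx T hT0).continuousAt).eventually_mem (hD.mem_nhds hxTΩ.1)
        obtain ⟨ε, hε, hball⟩ := Metric.eventually_nhds_iff_ball.mp (h1.and h2)
        refine ⟨ε, hε, fun t htl htr => ?_⟩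
        have : t ∈ Metric.ball T ε := by
          rw [Metric.mem_ball, Real.dist_eq, abs_lt]; constructor <;> linarith
        exact ⟨(hball t this).2, (hball t this).1.le⟩
      · -- strict decrease at T
        have hd : fderiv ℝ V (x T) (f (x T)) < 0 := hdec _ hxTΩ.1 hxTΩ.2 hxT0
        have hslope := hasDerivAt_iff_tendsto_slope.mp (hderiv T hT0 hxTΩ.1)
        have h1 : ∀ᶠ t in nhdsWithin T {T}ᶜ, slope (fun s => V (x s)) T t < 0 :=
          Filter.Tendsto.eventually_lt_const hd hslope
        have h2 : ∀ᶠ t in nhds T, x t ∈ D :=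
          ((hx T hT0).continuousAt).eventually_mem (hD.mem_nhds hxTΩ.1)
        have h3 : ∀ᶠ t in nhdsWithin T {T}ᶜ, x t ∈ D :=
          nhdsWithin_le_nhds h2
        obtain ⟨U, hU, hUsub⟩ := (h1.and h3).exists_mem
        obtain ⟨ε, hε, hball⟩ := Metric.mem_nhdsWithin_iff.mp hU
        refine ⟨ε, hε, fun t htl htr => ?_⟩
        have htmem : t ∈ Metric.ball T ε ∩ {T}ᶜ := by
          constructor
          · rw [Metric.mem_ball, Real.dist_eq, abs_lt]; constructor <;> linarith
          · exact fun h => absurd h (by simpa using htl.ne')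
        have := hUsub t (hball ⟨htmem.1, htmem.2⟩)
        have hsl : slope (fun s => V (x s)) T t < 0 := this.1
        rw [slope_def_field] at hsl
        have hVt : V (x t) < V (x T) := by
          have hpos : 0 < t - T := by linarith
          rw [div_neg_iff] at hsl
          rcases hsl with ⟨_, h⟩ | ⟨h, _⟩
          · linarith
          · linarith
        exact ⟨this.2, (lt_of_lt_of_le hVt hxTΩ.2).le⟩
    obtain ⟨ε, hε, hafter⟩ := hafter
    obtain ⟨a, haA, haε⟩ := exists_lt_of_csInf_lt hAne (by linarith : sInf A < T + ε)
    have haT : T ≤ a := csInf_le hAbdd haA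
    rcases eq_or_lt_of_le haT with h | h
    · exact haA.2 (h ▸ hxTΩ)
    · exact haA.2 (hafter a h haε)
  -- mean value theorem helper
  have hmvt : ∀ a b : ℝ, 0 ≤ a → a < b →
      ∃ ξ ∈ Ioo a b, fderiv ℝ V (x ξ) (f (x ξ)) = (V (x b) - V (x a)) / (b - a) := by
    intro a b ha hab
    apply exists_hasDerivAt_eq_slope (fun s => V (x s)) _ hab
    · intro t ht
      exact (hderiv t (le_trans ha ht.1) (hΩD (hinv t (le_trans ha ht.1)))).continuousAt.continuousWithinAt
    · intro t ht
      exact hderiv t (le_trans ha ht.1.le) (hΩD (hinv t (le_trans ha ht.1.le)))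
  -- antitone
  have hanti : ∀ a b : ℝ, 0 ≤ a → a ≤ b → V (x b) ≤ V (x a) := by
    intro a b ha hab
    rcases eq_or_lt_of_le hab with h | h
    · rw [h]
    · obtain ⟨ξ, hξ, heq⟩ := hmvt a b ha h
      have hξ0 : 0 ≤ ξ := le_trans ha hξ.1.le
      have := hle _ (hinv ξ hξ0)
      rw [heq] at this
      have hba : 0 < b - a := by linarith
      have := (div_le_iff₀ hba).mp this
      linarith
  -- continuity of the derivative map on D
  have hfc : ∀ y ∈ D, ContinuousAt f y := by
    intro y hy
    obtain ⟨K, U, hU, hlip⟩ := hf y hy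
    exact hlip.continuousOn.continuousAt hU
  have hhcont : ContinuousOn (fun y => fderiv ℝ V y (f y)) D :=
    (hV.continuousOn_fderiv_of_isOpen hD le_rfl).clm_apply
      (fun y hy => (hfc y hy).continuousWithinAt)
  -- Step E : V (x t) goes below every positive level
  have hsmall : ∀ m : ℝ, 0 < m → ∃ T : ℝ, 0 ≤ T ∧ V (x T) < m := by
    intro m hm
    by_contra hcon
    push_neg at hcon
    set K : Set (EuclideanSpace ℝ (Fin n)) := Ω ∩ V ⁻¹' Ici m with hKdef
    have hKclosed : IsClosed K :=
      (hV.continuousOn.mono hΩD).preimage_isClosed_of_isClosed hΩclosed isClosed_Ici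
    have hKcomp : IsCompact K := hcomp.of_isClosed_subset hKclosed inter_subset_left
    have hxK : ∀ t : ℝ, 0 ≤ t → x t ∈ K := fun t ht => ⟨hinv t ht, hcon t ht⟩
    obtain ⟨y₀, hy₀K, hy₀max⟩ := hKcomp.exists_isMaxOn ⟨x 0, hxK 0 le_rfl⟩
      (hhcont.mono (fun y hy => hΩD hy.1))
    set M := fderiv ℝ V y₀ (f y₀) with hMdef
    have hy₀0 : y₀ ≠ 0 := by
      intro h
      have : m ≤ V y₀ := hy₀K.2
      rw [h, hV0] at this
      linarith
    have hM : M < 0 := hdec _ (hΩD hy₀K.1) hy₀K.1.2 hy₀0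
    set t : ℝ := V (x 0) / (-M) + 1 with htdef
    have hg0 : 0 < V (x 0) := lt_of_lt_of_le hm (hcon 0 le_rfl)
    have hMpos : 0 < -M := by linarith
    have ht : 0 < t := by
      have h' : 0 ≤ V (x 0) / (-M) := div_nonneg hg0.le hMpos.le
      rw [htdef]
      linarith
    obtain ⟨ξ, hξ, heq⟩ := hmvt 0 t le_rfl ht
    have hξM : fderiv ℝ V (x ξ) (f (x ξ)) ≤ M := hy₀max (hxK ξ hξ.1.le)
    rw [heq] at hξM
    have h1 : V (x t) - V (x 0) ≤ M * t := by
      have := (div_le_iff₀ (by linarith : (0:ℝ) < t - 0)).mp hξM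
      linarith
    have h2 : M * t = -V (x 0) + M := by
      have hM0 : M ≠ 0 := hM.ne
      rw [htdef]
      field_simp
    have h3 : m ≤ V (x t) := hcon t ht.le
    linarith
  -- Step F : conclusion
  rw [Metric.tendsto_atTop]
  intro ε hε
  set Kε : Set (EuclideanSpace ℝ (Fin n)) := Ω ∩ {y | ε ≤ dist y 0} with hKεdef
  have hKεclosed : IsClosed Kε :=
    hΩclosed.inter (isClosed_le continuous_const (continuous_id.dist continuous_const))
  have hKεcomp : IsCompact Kε := hcomp.of_isClosed_subset hKεclosed inter_subset_left
  rcases Kε.eq_empty_or_nonempty with hne | hne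
  · refine ⟨0, fun t ht => ?_⟩
    by_contra hcontra
    push_neg at hcontra
    have : x t ∈ Kε := ⟨hinv t ht, hcontra⟩
    rw [hne] at this
    exact this
  · obtain ⟨y₁, hy₁K, hy₁min⟩ := hKεcomp.exists_isMinOn hne
      (hV.continuousOn.mono (fun y hy => hΩD hy.1))
    have hy₁0 : y₁ ≠ 0 := by
      intro h
      have : ε ≤ dist y₁ 0 := hy₁K.2
      rw [h, dist_self] at this
      linarith
    have hm : 0 < V y₁ := hVpos _ (hΩD hy₁K.1) hy₁0
    obtain ⟨T, hT0, hT⟩ := hsmall (V y₁) hm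
    refine ⟨T, fun t ht => ?_⟩
    by_contra hcontra
    push_neg at hcontra
    have hxtK : x t ∈ Kε := ⟨hinv t (le_trans hT0 ht), hcontra⟩
    have : V y₁ ≤ V (x t) := hy₁min hxtK
    have : V (x t) ≤ V (x T) := hanti T t hT0 ht
    linarith [hy₁min hxtK]
end

section
/- Let φ(x) = W₂ tanh(W₁x + b₁) with scalar output, V(x) = (φ(x) − φ(0))² + xᵀPx with P symmetric, and f: ℝⁿ → ℝⁿ C¹ with f(0)=0 and Jacobian A at 0. Then the derivative of V along f satisfies V̇(x) = 2xᵀ(W₁ᵀDW₂ᵀW₂DW₁ + P)Ax + ρ(x), where D = diag(1 − tanh²(b₁)) and ρ(x)/‖x‖² → 0 as x → 0. -/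
theorem VQD_hasDerivAt_tanh (x : ℝ) : HasDerivAt Real.tanh (1 - Real.tanh x ^ 2) x := by
  have h := ((Real.hasDerivAt_sinh x).div (Real.hasDerivAt_cosh x) (ne_of_gt (Real.cosh_pos x)))
  have heq : (Real.cosh x * Real.cosh x - Real.sinh x * Real.sinh x) / Real.cosh x ^ 2
      = 1 - Real.tanh x ^ 2 := by
    rw [Real.tanh_eq_sinh_div_cosh, div_pow, eq_sub_iff_add_eq, ← add_div,
      div_eq_one_iff_eq (by positivity)]
    nlinarith [Real.cosh_sq_sub_sinh_sq x]
  have hfe : Real.tanh = fun y => Real.sinh y / Real.cosh y := by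
    funext y; exact Real.tanh_eq_sinh_div_cosh y
  rw [← heq] at *
  rw [hfe]
  exact h

theorem VQD_one_sub_tanh_sq (x : ℝ) : 0 ≤ 1 - Real.tanh x ^ 2 ∧ 1 - Real.tanh x ^ 2 ≤ 1 := by
  have hc : (0:ℝ) < Real.cosh x ^ 2 := by positivity
  have h1 : 1 - Real.tanh x ^ 2 = 1 / Real.cosh x ^ 2 := by
    rw [Real.tanh_eq_sinh_div_cosh, div_pow]
    rw [eq_div_iff (ne_of_gt hc)]
    rw [sub_mul, one_mul, div_mul_cancel₀ _ (ne_of_gt hc)]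
    exact Real.cosh_sq_sub_sinh_sq x
  constructor
  · rw [h1]; positivity
  · rw [h1, div_le_one hc]
    nlinarith [Real.one_le_cosh x]

theorem VQD_tanh_lipschitz (a b : ℝ) : |Real.tanh a - Real.tanh b| ≤ |a - b| := by
  have := Convex.norm_image_sub_le_of_norm_hasDerivWithin_le
    (f := Real.tanh) (f' := fun y => 1 - Real.tanh y ^ 2) (C := 1) (s := Set.univ)
    (fun y _ => (VQD_hasDerivAt_tanh y).hasDerivWithinAt)
    (fun y _ => by
      rw [Real.norm_eq_abs, abs_le]
      refine ⟨by linarith [(VQD_one_sub_tanh_sq y).1], (VQD_one_sub_tanh_sq y).2⟩)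
    convex_univ (Set.mem_univ b) (Set.mem_univ a)
  simpa [Real.norm_eq_abs] using this

theorem VQD_abs_tanh_le (x : ℝ) : |Real.tanh x| ≤ 1 := by
  nlinarith [(VQD_one_sub_tanh_sq x).1, abs_nonneg (Real.tanh x), sq_abs (Real.tanh x)]
theorem VQD_coord_le {N : ℕ} (v : EuclideanSpace ℝ (Fin N)) (i : Fin N) : |v i| ≤ ‖v‖ := by
  rw [EuclideanSpace.norm_eq,
    show |v i| = Real.sqrt (‖v i‖^2) by rw [Real.norm_eq_abs, Real.sqrt_sq_eq_abs]; exact (abs_abs _).symm]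
  exact Real.sqrt_le_sqrt
    (Finset.single_le_sum (f := fun j => ‖v j‖^2) (fun j _ => by positivity) (Finset.mem_univ i))
noncomputable def VQDphiD {n N : ℕ} (W₁ : EuclideanSpace ℝ (Fin n) →L[ℝ] EuclideanSpace ℝ (Fin N))
    (b₁ c : Fin N → ℝ) (x : EuclideanSpace ℝ (Fin n)) : EuclideanSpace ℝ (Fin n) →L[ℝ] ℝ :=
  ∑ i, c i • ((1 - Real.tanh (W₁ x i + b₁ i) ^ 2) • ((EuclideanSpace.proj i).comp W₁))

theorem VQD_phiD_apply {n N : ℕ} (W₁ : EuclideanSpace ℝ (Fin n) →L[ℝ] EuclideanSpace ℝ (Fin N))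
    (b₁ c : Fin N → ℝ) (x v : EuclideanSpace ℝ (Fin n)) :
    VQDphiD W₁ b₁ c x v = ∑ i, c i * ((1 - Real.tanh (W₁ x i + b₁ i) ^ 2) * W₁ v i) := by
  simp [VQDphiD, ContinuousLinearMap.sum_apply, smul_eq_mul]

theorem VQD_hasFDerivAt_phi {n N : ℕ} (W₁ : EuclideanSpace ℝ (Fin n) →L[ℝ] EuclideanSpace ℝ (Fin N))
    (b₁ c : Fin N → ℝ) (x : EuclideanSpace ℝ (Fin n)) :
    HasFDerivAt (fun x => ∑ i, Real.tanh (W₁ x i + b₁ i) * c i) (VQDphiD W₁ b₁ c x) x := by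
  apply HasFDerivAt.fun_sum
  intro i _
  have hin : HasFDerivAt (fun x : EuclideanSpace ℝ (Fin n) => W₁ x i + b₁ i)
      ((EuclideanSpace.proj (𝕜 := ℝ) i).comp W₁) x :=
    (((EuclideanSpace.proj (𝕜 := ℝ) i).comp W₁).hasFDerivAt).add_const (b₁ i)
  exact ((VQD_hasDerivAt_tanh (W₁ x i + b₁ i)).comp_hasFDerivAt x hin).mul_const (c i)

theorem VQD_phiD_bound {n N : ℕ} (W₁ : EuclideanSpace ℝ (Fin n) →L[ℝ] EuclideanSpace ℝ (Fin N))
    (b₁ c : Fin N → ℝ) (x v : EuclideanSpace ℝ (Fin n)) :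
    |VQDphiD W₁ b₁ c x v| ≤ ((∑ i, |c i|) * ‖W₁‖) * ‖v‖ := by
  rw [VQD_phiD_apply]
  calc |∑ i, c i * ((1 - Real.tanh (W₁ x i + b₁ i) ^ 2) * W₁ v i)|
      ≤ ∑ i, |c i * ((1 - Real.tanh (W₁ x i + b₁ i) ^ 2) * W₁ v i)| :=
        Finset.abs_sum_le_sum_abs _ _
    _ ≤ ∑ i, |c i| * (‖W₁‖ * ‖v‖) := by
        apply Finset.sum_le_sum
        intro i _
        rw [abs_mul, abs_mul]
        apply mul_le_mul_of_nonneg_left _ (abs_nonneg _)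
        have h1 := VQD_one_sub_tanh_sq (W₁ x i + b₁ i)
        have h2 : |W₁ v i| ≤ ‖W₁ v‖ := VQD_coord_le (W₁ v) i
        have h3 : ‖W₁ v‖ ≤ ‖W₁‖ * ‖v‖ := W₁.le_opNorm v
        have h4 : |1 - Real.tanh (W₁ x i + b₁ i) ^ 2| ≤ 1 := by
          rw [abs_of_nonneg h1.1]; exact h1.2
        calc |1 - Real.tanh (W₁ x i + b₁ i) ^ 2| * |W₁ v i| ≤ 1 * |W₁ v i| := by
              apply mul_le_mul_of_nonneg_right h4 (abs_nonneg _)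
          _ = |W₁ v i| := one_mul _
          _ ≤ ‖W₁‖ * ‖v‖ := h2.trans h3
    _ = ((∑ i, |c i|) * ‖W₁‖) * ‖v‖ := by rw [← Finset.sum_mul]; ring

theorem VQD_phiD_diff {n N : ℕ} (W₁ : EuclideanSpace ℝ (Fin n) →L[ℝ] EuclideanSpace ℝ (Fin N))
    (b₁ c : Fin N → ℝ) (x v : EuclideanSpace ℝ (Fin n)) :
    |VQDphiD W₁ b₁ c x v - VQDphiD W₁ b₁ c 0 v|
      ≤ ((∑ i, |c i|) * (2 * ‖W₁‖ * ‖W₁‖)) * (‖x‖ * ‖v‖) := by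
  rw [VQD_phiD_apply, VQD_phiD_apply, ← Finset.sum_sub_distrib]
  have key : ∀ i : Fin N,
      |c i * ((1 - Real.tanh (W₁ x i + b₁ i) ^ 2) * W₁ v i)
        - c i * ((1 - Real.tanh (W₁ 0 i + b₁ i) ^ 2) * W₁ v i)|
      ≤ |c i| * (2 * ‖W₁‖ * ‖W₁‖ * (‖x‖ * ‖v‖)) := by
    intro i
    have hz : W₁ (0 : EuclideanSpace ℝ (Fin n)) i = 0 := by rw [map_zero]; rfl
    rw [hz, zero_add]
    have e : c i * ((1 - Real.tanh (W₁ x i + b₁ i) ^ 2) * W₁ v i)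
        - c i * ((1 - Real.tanh (b₁ i) ^ 2) * W₁ v i)
        = c i * ((Real.tanh (b₁ i) ^ 2 - Real.tanh (W₁ x i + b₁ i) ^ 2) * W₁ v i) := by ring
    rw [e, abs_mul, abs_mul]
    apply mul_le_mul_of_nonneg_left _ (abs_nonneg (c i))
    have hdsq : |Real.tanh (b₁ i) ^ 2 - Real.tanh (W₁ x i + b₁ i) ^ 2|
        ≤ 2 * |W₁ x i| := by
      have e2 : Real.tanh (b₁ i) ^ 2 - Real.tanh (W₁ x i + b₁ i) ^ 2
          = (Real.tanh (b₁ i) - Real.tanh (W₁ x i + b₁ i))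
            * (Real.tanh (b₁ i) + Real.tanh (W₁ x i + b₁ i)) := by ring
      rw [e2, abs_mul]
      have hlip : |Real.tanh (b₁ i) - Real.tanh (W₁ x i + b₁ i)| ≤ |W₁ x i| := by
        have := VQD_tanh_lipschitz (b₁ i) (W₁ x i + b₁ i)
        simpa [abs_sub_comm] using this.trans_eq (by rw [show b₁ i - (W₁ x i + b₁ i) = -(W₁ x i) by ring, abs_neg])
      have hsum : |Real.tanh (b₁ i) + Real.tanh (W₁ x i + b₁ i)| ≤ 2 := by
        calc |Real.tanh (b₁ i) + Real.tanh (W₁ x i + b₁ i)|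
            ≤ |Real.tanh (b₁ i)| + |Real.tanh (W₁ x i + b₁ i)| := abs_add_le _ _
          _ ≤ 1 + 1 := add_le_add (VQD_abs_tanh_le _) (VQD_abs_tanh_le _)
          _ = 2 := by norm_num
      calc |Real.tanh (b₁ i) - Real.tanh (W₁ x i + b₁ i)|
            * |Real.tanh (b₁ i) + Real.tanh (W₁ x i + b₁ i)|
          ≤ |W₁ x i| * 2 :=
            mul_le_mul hlip hsum (abs_nonneg _) (abs_nonneg _)
        _ = 2 * |W₁ x i| := by ring
    have hWx : |W₁ x i| ≤ ‖W₁‖ * ‖x‖ := (VQD_coord_le (W₁ x) i).trans (W₁.le_opNorm x)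
    have hWv : |W₁ v i| ≤ ‖W₁‖ * ‖v‖ := (VQD_coord_le (W₁ v) i).trans (W₁.le_opNorm v)
    calc |Real.tanh (b₁ i) ^ 2 - Real.tanh (W₁ x i + b₁ i) ^ 2| * |W₁ v i|
        ≤ (2 * (‖W₁‖ * ‖x‖)) * (‖W₁‖ * ‖v‖) := by
          apply mul_le_mul (hdsq.trans (by nlinarith [abs_nonneg (W₁ x i)])) hWv (abs_nonneg _)
          positivity
      _ = 2 * ‖W₁‖ * ‖W₁‖ * (‖x‖ * ‖v‖) := by ring
  calc |∑ i, (c i * ((1 - Real.tanh (W₁ x i + b₁ i) ^ 2) * W₁ v i)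
        - c i * ((1 - Real.tanh (W₁ 0 i + b₁ i) ^ 2) * W₁ v i))|
      ≤ ∑ i, |c i * ((1 - Real.tanh (W₁ x i + b₁ i) ^ 2) * W₁ v i)
        - c i * ((1 - Real.tanh (W₁ 0 i + b₁ i) ^ 2) * W₁ v i)| := Finset.abs_sum_le_sum_abs _ _
    _ ≤ ∑ i, |c i| * (2 * ‖W₁‖ * ‖W₁‖ * (‖x‖ * ‖v‖)) := Finset.sum_le_sum fun i _ => key i
    _ = ((∑ i, |c i|) * (2 * ‖W₁‖ * ‖W₁‖)) * (‖x‖ * ‖v‖) := by rw [← Finset.sum_mul]; ring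
noncomputable def VQDqD {n : ℕ} (P : Matrix (Fin n) (Fin n) ℝ) (x : EuclideanSpace ℝ (Fin n)) :
    EuclideanSpace ℝ (Fin n) →L[ℝ] ℝ :=
  ∑ i, ∑ j, ((x i * P i j) • (EuclideanSpace.proj (𝕜 := ℝ) j)
    + x j • (P i j • (EuclideanSpace.proj (𝕜 := ℝ) i)))

theorem VQD_q_hasFDerivAt {n : ℕ} (P : Matrix (Fin n) (Fin n) ℝ) (x : EuclideanSpace ℝ (Fin n)) :
    HasFDerivAt (fun x : EuclideanSpace ℝ (Fin n) => ∑ i, ∑ j, x i * P i j * x j)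
      (VQDqD P x) x := by
  apply HasFDerivAt.fun_sum
  intro i _
  apply HasFDerivAt.fun_sum
  intro j _
  exact ((EuclideanSpace.proj (𝕜 := ℝ) i).hasFDerivAt.mul_const (P i j)).mul
    (EuclideanSpace.proj (𝕜 := ℝ) j).hasFDerivAt

theorem VQD_qD_apply {n : ℕ} (P : Matrix (Fin n) (Fin n) ℝ) (hP : P.IsSymm)
    (x v : EuclideanSpace ℝ (Fin n)) :
    VQDqD P x v = 2 * ∑ i, ∑ j, x i * P i j * v j := by
  have h1 : VQDqD P x v = ∑ i, ∑ j, (x i * P i j * v j + x j * (P i j * v i)) := by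
    simp [VQDqD, ContinuousLinearMap.sum_apply, smul_eq_mul, mul_assoc]
  rw [h1]
  have h2 : ∑ i, ∑ j, (x i * P i j * v j + x j * (P i j * v i))
      = (∑ i, ∑ j, x i * P i j * v j) + ∑ i, ∑ j, x j * (P i j * v i) := by
    rw [← Finset.sum_add_distrib]
    apply Finset.sum_congr rfl
    intro i _
    rw [← Finset.sum_add_distrib]
  rw [h2]
  have h3 : ∑ i, ∑ j, x j * (P i j * v i) = ∑ i, ∑ j, x i * P i j * v j := by
    rw [Finset.sum_comm]
    apply Finset.sum_congr rfl
    intro i _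
    apply Finset.sum_congr rfl
    intro j _
    rw [← hP.apply i j]
    ring
  rw [h3]; ring
open Asymptotics Filter

/-- Decomposition of `V̇` into its quadratic part, governed by the linearizations
of `φ` and `f` at the origin, plus a superquadratic remainder. -/
theorem Vdot_quadratic_decomposition {n N : ℕ}
    (W₁ : EuclideanSpace ℝ (Fin n) →L[ℝ] EuclideanSpace ℝ (Fin N))
    (W₂ : EuclideanSpace ℝ (Fin N) →L[ℝ] ℝ) (b₁ : Fin N → ℝ)
    (φ : EuclideanSpace ℝ (Fin n) → ℝ)
    (hφ : ∀ x, φ x = W₂ (WithLp.toLp 2 (fun i => Real.tanh (W₁ x i + b₁ i)) : EuclideanSpace ℝ (Fin N)))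
    (P : Matrix (Fin n) (Fin n) ℝ) (hP : P.IsSymm)
    (V : EuclideanSpace ℝ (Fin n) → ℝ)
    (hV : ∀ x, V x = (φ x - φ 0) ^ 2 + ∑ i, ∑ j, x i * P i j * x j)
    (f : EuclideanSpace ℝ (Fin n) → EuclideanSpace ℝ (Fin n))
    (hf : ContDiff ℝ 1 f) (hf0 : f 0 = 0)
    (L : EuclideanSpace ℝ (Fin n) → ℝ)
    (hL : ∀ x, L x = W₂ (WithLp.toLp 2 (fun i => (1 - Real.tanh (b₁ i) ^ 2) * W₁ x i) :
        EuclideanSpace ℝ (Fin N))) :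
    ∃ ρ : EuclideanSpace ℝ (Fin n) → ℝ,
      (∀ x, fderiv ℝ V x (f x)
          = 2 * (L x * L (fderiv ℝ f 0 x)
              + ∑ i, ∑ j, x i * P i j * fderiv ℝ f 0 x j) + ρ x) ∧
      Filter.Tendsto (fun x => ρ x / ‖x‖ ^ 2) (nhdsWithin 0 {0}ᶜ) (nhds 0) := by
  classical
  set A := fderiv ℝ f 0 with hA_def
  set c : Fin N → ℝ := fun i => W₂ (EuclideanSpace.single i 1) with hc
  -- expansion of W₂ in coordinates
  have hW₂ : ∀ v : EuclideanSpace ℝ (Fin N), W₂ v = ∑ i, v i * c i := by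
    intro v
    have hv : v = ∑ i, v i • EuclideanSpace.single i (1 : ℝ) := by
      ext j
      rw [WithLp.ofLp_sum, Finset.sum_apply]
      simp [EuclideanSpace.single_apply]
    conv_lhs => rw [hv]
    rw [map_sum]
    simp [map_smul, smul_eq_mul, hc]
  have hφ' : φ = fun x => ∑ i, Real.tanh (W₁ x i + b₁ i) * c i := by
    funext x; rw [hφ, hW₂]
  have hL' : ∀ x, L x = VQDphiD W₁ b₁ c 0 x := by
    intro x
    rw [hL, hW₂, VQD_phiD_apply]
    apply Finset.sum_congr rfl
    intro i _
    have hz : W₁ (0 : EuclideanSpace ℝ (Fin n)) i = 0 := by rw [map_zero]; rfl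
    rw [hz, zero_add]; ring
  have hφd : ∀ x, HasFDerivAt φ (VQDphiD W₁ b₁ c x) x := by
    intro x; rw [hφ']; exact VQD_hasFDerivAt_phi W₁ b₁ c x
  -- derivative of V
  have hVd : ∀ x, HasFDerivAt V
      ((2 * (φ x - φ 0)) • VQDphiD W₁ b₁ c x + VQDqD P x) x := by
    intro x
    have hsub := (hφd x).sub_const (φ 0)
    have h2 := (hsub.mul hsub).add (VQD_q_hasFDerivAt P x)
    have hVe : V = fun x => (φ x - φ 0) * (φ x - φ 0) + ∑ i, ∑ j, x i * P i j * x j := by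
      funext x; rw [hV x, pow_two]
    rw [hVe, show (2 * (φ x - φ 0)) • VQDphiD W₁ b₁ c x
      = (φ x - φ 0) • VQDphiD W₁ b₁ c x + (φ x - φ 0) • VQDphiD W₁ b₁ c x from by
        rw [two_mul, add_smul]]
    exact h2
  have hfderivV : ∀ x, fderiv ℝ V x (f x)
      = 2 * (φ x - φ 0) * (VQDphiD W₁ b₁ c x (f x)) + VQDqD P x (f x) := by
    intro x
    rw [(hVd x).fderiv]
    simp [ContinuousLinearMap.add_apply, ContinuousLinearMap.smul_apply, smul_eq_mul, mul_assoc]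
  -- the remainder
  refine ⟨fun x => fderiv ℝ V x (f x)
      - 2 * (L x * L (A x) + ∑ i, ∑ j, x i * P i j * A x j), fun x => by ring, ?_⟩
  -- basic asymptotics of f and φ
  have hA' : HasFDerivAt f A 0 := (hf.differentiable one_ne_zero 0).hasFDerivAt
  have hAo : (fun x => f x - A x) =o[nhds 0] fun x => x := by
    have h := hA'.isLittleO
    simpa [hf0] using h
  have hfO : f =O[nhds 0] fun x => x := by
    have h := hA'.isBigO_sub
    simpa [hf0] using h
  have hφo : (fun x => φ x - φ 0 - L x) =o[nhds 0] fun x => x := by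
    have h := (hφd 0).isLittleO
    simp only [sub_zero] at h
    have hfun : (fun x => φ x - φ 0 - L x)
        = fun x => φ x - φ 0 - VQDphiD W₁ b₁ c 0 x := by
      funext x; rw [hL' x]
    rw [hfun]
    exact h
  set M : ℝ := (∑ i, |c i|) * ‖W₁‖ with hM
  set C : ℝ := (∑ i, |c i|) * (2 * ‖W₁‖ * ‖W₁‖) with hC
  -- ‖x‖·‖x‖ is little-o of ‖x‖ near 0
  have hxx : (fun x : EuclideanSpace ℝ (Fin n) => ‖x‖ * ‖x‖) =o[nhds 0] fun x => ‖x‖ := by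
    rw [isLittleO_iff]
    intro ε hε
    filter_upwards [Metric.ball_mem_nhds (0 : EuclideanSpace ℝ (Fin n)) hε] with x hx
    have hx' : ‖x‖ < ε := by simpa [dist_eq_norm] using hx
    have h0 : (0:ℝ) ≤ ‖x‖ := norm_nonneg x
    rw [Real.norm_eq_abs, Real.norm_eq_abs, abs_of_nonneg (by positivity), abs_of_nonneg h0]
    nlinarith
  -- term 1
  have h2 : (fun x => VQDphiD W₁ b₁ c x (f x)) =O[nhds 0] fun x => ‖x‖ := by
    refine (IsBigO.of_bound M (Filter.Eventually.of_forall fun x => ?_)).trans hfO.norm_right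
    rw [Real.norm_eq_abs]
    exact VQD_phiD_bound W₁ b₁ c x (f x)
  have t1 : (fun x => (φ x - φ 0 - L x) * VQDphiD W₁ b₁ c x (f x))
      =o[nhds 0] fun x => ‖x‖ * ‖x‖ := hφo.norm_right.mul_isBigO h2
  -- term 2
  have hLO : L =O[nhds 0] fun x => ‖x‖ := by
    refine IsBigO.of_bound M (Filter.Eventually.of_forall fun x => ?_)
    rw [Real.norm_eq_abs, Real.norm_eq_abs, abs_of_nonneg (norm_nonneg x), hL' x]
    exact VQD_phiD_bound W₁ b₁ c 0 x
  have hbr : (fun x => VQDphiD W₁ b₁ c x (f x) - VQDphiD W₁ b₁ c 0 (f x))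
      =O[nhds 0] fun x => ‖x‖ * ‖x‖ := by
    obtain ⟨K, hK⟩ := hfO.bound
    refine IsBigO.of_bound (C * K) ?_
    filter_upwards [hK] with x hx
    have hb := VQD_phiD_diff W₁ b₁ c x (f x)
    have hx0 : (0:ℝ) ≤ ‖x‖ := norm_nonneg x
    have hfx0 : (0:ℝ) ≤ ‖f x‖ := norm_nonneg _
    have hC0 : (0:ℝ) ≤ C := by
      rw [hC]
      have : (0:ℝ) ≤ ∑ i, |c i| := Finset.sum_nonneg fun i _ => abs_nonneg _
      positivity
    rw [Real.norm_eq_abs, norm_mul, norm_norm]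
    have hx' : ‖f x‖ ≤ K * ‖x‖ := by simpa [Real.norm_eq_abs] using hx
    calc |VQDphiD W₁ b₁ c x (f x) - VQDphiD W₁ b₁ c 0 (f x)| ≤ C * (‖x‖ * ‖f x‖) := hb
      _ ≤ C * (‖x‖ * (K * ‖x‖)) := by
          apply mul_le_mul_of_nonneg_left _ hC0
          exact mul_le_mul_of_nonneg_left hx' hx0
      _ = C * K * (‖x‖ * ‖x‖) := by ring
  have t2 : (fun x => L x * (VQDphiD W₁ b₁ c x (f x) - VQDphiD W₁ b₁ c 0 (f x)))
      =o[nhds 0] fun x => ‖x‖ * ‖x‖ := by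
    have := hLO.mul_isLittleO (hbr.trans_isLittleO hxx)
    exact this
  -- term 3
  have hL0o : (fun x => VQDphiD W₁ b₁ c 0 (f x - A x)) =o[nhds 0] fun x => ‖x‖ := by
    exact ((VQDphiD W₁ b₁ c 0).isBigO_comp _ _).trans_isLittleO hAo.norm_right
  have t3 : (fun x => L x * VQDphiD W₁ b₁ c 0 (f x - A x))
      =o[nhds 0] fun x => ‖x‖ * ‖x‖ := hLO.mul_isLittleO hL0o
  -- term 4
  have t4 : (fun x => ∑ i, ∑ j, x i * P i j * (f x - A x) j)
      =o[nhds 0] fun x => ‖x‖ * ‖x‖ := by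
    apply Asymptotics.IsLittleO.fun_sum
    intro i _
    apply Asymptotics.IsLittleO.fun_sum
    intro j _
    have hl : (fun x : EuclideanSpace ℝ (Fin n) => x i * P i j) =O[nhds 0] fun x => ‖x‖ := by
      refine IsBigO.of_bound |P i j| (Filter.Eventually.of_forall fun x => ?_)
      rw [Real.norm_eq_abs, Real.norm_eq_abs, abs_of_nonneg (norm_nonneg x), abs_mul]
      exact mul_le_mul_of_nonneg_right (VQD_coord_le x i) (abs_nonneg _) |>.trans_eq (mul_comm _ _)
    have hr : (fun x => (f x - A x) j) =o[nhds 0] fun x => ‖x‖ := by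
      exact ((EuclideanSpace.proj (𝕜 := ℝ) j).isBigO_comp _ _).trans_isLittleO hAo.norm_right
    exact hl.mul_isLittleO hr
  -- assemble
  have hρeq : (fun x => fderiv ℝ V x (f x)
      - 2 * (L x * L (A x) + ∑ i, ∑ j, x i * P i j * A x j))
      = fun x => 2 * ((φ x - φ 0 - L x) * VQDphiD W₁ b₁ c x (f x)
        + L x * (VQDphiD W₁ b₁ c x (f x) - VQDphiD W₁ b₁ c 0 (f x))
        + L x * VQDphiD W₁ b₁ c 0 (f x - A x)
        + ∑ i, ∑ j, x i * P i j * (f x - A x) j) := by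
    funext x
    rw [hfderivV x, VQD_qD_apply P hP]
    have e3 : VQDphiD W₁ b₁ c 0 (f x - A x)
        = VQDphiD W₁ b₁ c 0 (f x) - VQDphiD W₁ b₁ c 0 (A x) := map_sub _ _ _
    have e4 : ∑ i, ∑ j, x i * P i j * (f x - A x) j
        = (∑ i, ∑ j, x i * P i j * f x j) - ∑ i, ∑ j, x i * P i j * A x j := by
      rw [← Finset.sum_sub_distrib]
      apply Finset.sum_congr rfl
      intro i _
      rw [← Finset.sum_sub_distrib]
      apply Finset.sum_congr rfl
      intro j _
      have : (f x - A x) j = f x j - A x j := rfl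
      rw [this]; ring
    rw [e3, e4, hL' x, hL' (A x)]
    ring
  have hfin : (fun x => fderiv ℝ V x (f x)
      - 2 * (L x * L (A x) + ∑ i, ∑ j, x i * P i j * A x j))
      =o[nhds 0] fun x => ‖x‖ * ‖x‖ := by
    rw [hρeq]
    exact (((t1.add t2).add t3).add t4).const_mul_left 2
  have htendsto := hfin.tendsto_div_nhds_zero
  have hsq : (fun x : EuclideanSpace ℝ (Fin n) =>
      (fderiv ℝ V x (f x) - 2 * (L x * L (A x) + ∑ i, ∑ j, x i * P i j * A x j)) / ‖x‖ ^ 2)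
      = fun x => (fderiv ℝ V x (f x)
        - 2 * (L x * L (A x) + ∑ i, ∑ j, x i * P i j * A x j)) / (‖x‖ * ‖x‖) := by
    funext x; rw [pow_two]
  rw [hsq]
  exact htendsto.mono_left nhdsWithin_le_nhds
end
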